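/- Let E₁ and E₂ be Banach spaces over 𝕜, let 𝒜₁ ⊆ B(E₁) and 𝒜₂ ⊆ B(E₂) be standard subalgebras, and let T : 𝒜₁ → 𝒜₂ be a biseparating linear bijection. Suppose S : E₁ → E₂ and Ψ : E₁* → E₂* are (plain) linear bijections satisfying T(e ⊗ e*) = S(e) ⊗ Ψ(e*) for all e ∈ E₁ and e* ∈ E₁*. Then for all e ∈ E₁ and e* ∈ E₁*: e*(e) = 0 if and only if (Ψ(e*))(S(e)) = 0; in particular, ker(Ψ(e*) ∘ S) = ker e* and ker Ψ(e*) = S(ker e*) for every e* ∈ E₁*. -/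

import Mathlib

set_option synthInstance.maxHeartbeats 400000
set_option maxHeartbeats 1000000

/-- A subalgebra of `B(E)` is *standard* if it contains every continuous finite-rank
operator (it contains the identity automatically, being a subalgebra). -/
def IsStandardSubalgebra (𝕜 : Type*) [RCLike 𝕜] {E : Type*} [NormedAddCommGroup E]
    [NormedSpace 𝕜 E] (𝒜 : Subalgebra 𝕜 (E →L[𝕜] E)) : Prop :=
  ∀ A : E →L[𝕜] E, FiniteDimensional 𝕜 (LinearMap.range (A : E →ₗ[𝕜] E)) → A ∈ 𝒜

/-- The rank-one operator `e ⊗ e*` sending `e'` to `e*(e') • e`. -/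
noncomputable def rankOne {𝕜 : Type*} [RCLike 𝕜] {E : Type*} [NormedAddCommGroup E]
    [NormedSpace 𝕜 E] (e : E) (f : E →L[𝕜] 𝕜) : E →L[𝕜] E :=
  f.smulRight e


lemma rankOne_mul_rankOne {𝕜 : Type*} [RCLike 𝕜] {E : Type*} [NormedAddCommGroup E]
    [NormedSpace 𝕜 E] (e : E) (f : E →L[𝕜] 𝕜) :
    rankOne e f * rankOne e f = f e • rankOne e f := by
  ext x
  simp [rankOne, ContinuousLinearMap.mul_apply, smul_smul, mul_comm]

lemma rankOne_mem {𝕜 : Type*} [RCLike 𝕜] {E : Type*} [NormedAddCommGroup E]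
    [NormedSpace 𝕜 E] {𝒜 : Subalgebra 𝕜 (E →L[𝕜] E)}
    (h𝒜 : IsStandardSubalgebra 𝕜 𝒜)
    (e : E) (f : E →L[𝕜] 𝕜) : rankOne e f ∈ 𝒜 := by
  apply h𝒜
  have hle : LinearMap.range ((rankOne e f : E →L[𝕜] E) : E →ₗ[𝕜] E) ≤ 𝕜 ∙ e := by
    rintro y ⟨x, rfl⟩
    exact Submodule.mem_span_singleton.2 ⟨f x, rfl⟩
  exact Submodule.finiteDimensional_of_le hle

theorem kernel_identities_of_biseparating
    {𝕜 : Type*} [RCLike 𝕜]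
    {E₁ E₂ : Type*} [NormedAddCommGroup E₁] [NormedSpace 𝕜 E₁] [CompleteSpace E₁]
    [NormedAddCommGroup E₂] [NormedSpace 𝕜 E₂] [CompleteSpace E₂]
    (𝒜₁ : Subalgebra 𝕜 (E₁ →L[𝕜] E₁)) (𝒜₂ : Subalgebra 𝕜 (E₂ →L[𝕜] E₂))
    (h𝒜₁ : IsStandardSubalgebra 𝕜 𝒜₁) (h𝒜₂ : IsStandardSubalgebra 𝕜 𝒜₂)
    (T : 𝒜₁ →ₗ[𝕜] 𝒜₂) (hbij : Function.Bijective T)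
    (hsep : ∀ a b : 𝒜₁, a * b = 0 → T a * T b = 0)
    (hsep' : ∀ a b : 𝒜₁, T a * T b = 0 → a * b = 0)
    (S : E₁ →ₗ[𝕜] E₂) (Ψ : (E₁ →L[𝕜] 𝕜) →ₗ[𝕜] (E₂ →L[𝕜] 𝕜))
    (hS : Function.Bijective S) (hΨ : Function.Bijective Ψ)
    (hrep : ∀ (e : E₁) (f : E₁ →L[𝕜] 𝕜) (h : rankOne e f ∈ 𝒜₁),
      ((T ⟨rankOne e f, h⟩ : E₂ →L[𝕜] E₂)) = rankOne (S e) (Ψ f)) :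
    (∀ (e : E₁) (f : E₁ →L[𝕜] 𝕜), f e = 0 ↔ Ψ f (S e) = 0) ∧
      (∀ f : E₁ →L[𝕜] 𝕜,
        LinearMap.ker (((Ψ f : E₂ →L[𝕜] 𝕜) : E₂ →ₗ[𝕜] 𝕜) ∘ₗ S) = LinearMap.ker (f : E₁ →ₗ[𝕜] 𝕜)) ∧
      (∀ f : E₁ →L[𝕜] 𝕜,
        LinearMap.ker ((Ψ f : E₂ →L[𝕜] 𝕜) : E₂ →ₗ[𝕜] 𝕜) = (LinearMap.ker (f : E₁ →ₗ[𝕜] 𝕜)).map S) := by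
  have key : ∀ (e : E₁) (f : E₁ →L[𝕜] 𝕜), f e = 0 ↔ Ψ f (S e) = 0 := by
    intro e f
    have hm : rankOne e f ∈ 𝒜₁ := rankOne_mem h𝒜₁ e f
    constructor
    · intro hfe
      have h0 : (⟨rankOne e f, hm⟩ : 𝒜₁) * ⟨rankOne e f, hm⟩ = 0 := by
        apply Subtype.ext
        show rankOne e f * rankOne e f = 0
        rw [rankOne_mul_rankOne, hfe, zero_smul]
      have h1 := hsep _ _ h0
      have h2 : rankOne (S e) (Ψ f) * rankOne (S e) (Ψ f) = 0 := by
        have := congrArg Subtype.val h1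
        simpa [hrep e f hm] using this
      rw [rankOne_mul_rankOne] at h2
      by_contra hne
      have h3 : Ψ f (S e) • (Ψ f (S e) • S e) = 0 := by
        have := ContinuousLinearMap.ext_iff.1 h2 (S e)
        simpa [rankOne] using this
      rw [smul_smul, smul_eq_zero] at h3
      rcases h3 with h3 | h3
      · exact hne (by rcases mul_self_eq_zero.1 h3 with h; exact h)
      · rw [h3] at hne; simp at hne
    · intro hfe
      have h2 : rankOne (S e) (Ψ f) * rankOne (S e) (Ψ f) = 0 := by
        rw [rankOne_mul_rankOne, hfe, zero_smul]
      have h0 : T ⟨rankOne e f, hm⟩ * T ⟨rankOne e f, hm⟩ = 0 := by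
        apply Subtype.ext
        show (T ⟨rankOne e f, hm⟩ : E₂ →L[𝕜] E₂) * (T ⟨rankOne e f, hm⟩ : E₂ →L[𝕜] E₂) = 0
        rw [hrep e f hm]; exact h2
      have h1 := hsep' _ _ h0
      have h3 : rankOne e f * rankOne e f = 0 := by
        have := congrArg Subtype.val h1
        simpa using this
      rw [rankOne_mul_rankOne] at h3
      by_contra hne
      have h4 : f e • (f e • e) = 0 := by
        have := ContinuousLinearMap.ext_iff.1 h3 e
        simpa [rankOne] using this
      rw [smul_smul, smul_eq_zero] at h4
      rcases h4 with h4 | h4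
      · exact hne (mul_self_eq_zero.1 h4)
      · rw [h4] at hne; simp at hne
  refine ⟨key, ?_, ?_⟩
  · intro f
    ext x
    simp only [LinearMap.mem_ker, LinearMap.comp_apply, ContinuousLinearMap.coe_coe]
    exact (key x f).symm
  · intro f
    ext y
    constructor
    · intro hy
      obtain ⟨x, rfl⟩ := hS.2 y
      exact Submodule.mem_map.2 ⟨x, (key x f).2 hy, rfl⟩
    · rintro ⟨x, hx, rfl⟩
      exact (key x f).1 hx
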